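/- In microCCS with choice, distributed bisimilarity coincides with structural congruence: P is distributedly bisimilar to Q if and only if P ≡ Q, where ≡ additionally includes the abelian-monoid laws for + and the idempotence law S+S ≡ S. -/

import Mathlib

/-- CCS visible actions: a name `a` or a coname `ā`. -/
inductive Act where
  | inp : ℕ → Act
  | out : ℕ → Act
deriving DecidableEq

/-- The coaction. -/
def Act.co : Act → Act
  | .inp a => .out a
  | .out a => .inp a

/-- Transition labels. -/
inductive Lab where
  | act : Act → Lab
  | tau : Lab
deriving DecidableEq

mutual
/-- Guarded sums of microCCS with choice: S ::= 0 | η.P | S + S. -/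
inductive SP where
  | nil : SP
  | pre : Act → PP → SP
  | sum : SP → SP → SP
/-- Processes of microCCS with choice: P ::= S | P ‖ P. -/
inductive PP where
  | ofS : SP → PP
  | par : PP → PP → PP
end

/-- Transitions of sum terms. -/
inductive SStep : SP → Act → PP → Prop where
  | pre (η P) : SStep (.pre η P) η P
  | sumL : SStep S η P → SStep (.sum S S') η P
  | sumR : SStep S' η P → SStep (.sum S S') η P

/-- The standard CCS transition system on microCCS with choice. -/
inductive PStep : PP → Lab → PP → Prop where
  | ofS {S : SP} {η : Act} {P : PP} : SStep S η P → PStep (.ofS S) (.act η) P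
  | syn {P P' Q Q' : PP} {η : Act} :
      PStep P (.act η) P' → PStep Q (.act η.co) Q' →
      PStep (.par P Q) .tau (.par P' Q')
  | parL (Q) : PStep P μ P' → PStep (.par P Q) μ (.par P' Q)
  | parR (P) : PStep Q μ Q' → PStep (.par P Q) μ (.par P Q')

/-- A (symmetric) strong bisimulation on microCCS with choice. -/
def IsPBisim (R : PP → PP → Prop) : Prop :=
  (∀ P Q, R P Q → R Q P) ∧
  ∀ P Q μ P', R P Q → PStep P μ P' → ∃ Q', PStep Q μ Q' ∧ R P' Q'

/-- Strong bisimilarity on microCCS with choice. -/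
def PBisim (P Q : PP) : Prop := ∃ R, IsPBisim R ∧ R P Q

/-- Distributed transitions `P --μ-->_d ⟨P₁, P₂⟩`, with local residual `P₁`
    and concurrent residual `P₂`. -/
inductive DStep : PP → Lab → PP → PP → Prop where
  | ofS {S : SP} {η : Act} {P : PP} :
      SStep S η P → DStep (.ofS S) (.act η) P (.ofS .nil)
  | parL {P P₁ P₂ : PP} {μ : Lab} (P' : PP) :
      DStep P μ P₁ P₂ → DStep (.par P P') μ P₁ (.par P₂ P')
  | parR {P' P₁ P₂ : PP} {μ : Lab} (P : PP) :
      DStep P' μ P₁ P₂ → DStep (.par P P') μ P₁ (.par P P₂)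
  | syn {P Q P₁ P₂ Q₁ Q₂ : PP} {η : Act} :
      DStep P (.act η) P₁ P₂ → DStep Q (.act η.co) Q₁ Q₂ →
      DStep (.par P Q) .tau (.par P₁ Q₁) (.par P₂ Q₂)

/-- A (symmetric) distributed bisimulation. -/
def IsDBisim (R : PP → PP → Prop) : Prop :=
  (∀ P Q, R P Q → R Q P) ∧
  ∀ P Q μ P₁ P₂, R P Q → DStep P μ P₁ P₂ →
    ∃ Q₁ Q₂, DStep Q μ Q₁ Q₂ ∧ R P₁ Q₁ ∧ R P₂ Q₂

/-- Distributed bisimilarity. -/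
def DBisim (P Q : PP) : Prop := ∃ R, IsDBisim R ∧ R P Q

mutual
/-- Structural congruence on sums: abelian monoid laws and idempotence
    for `+`, plus congruence rules. -/
inductive SSC : SP → SP → Prop where
  | refl (S) : SSC S S
  | symm : SSC S T → SSC T S
  | trans : SSC S T → SSC T U → SSC S U
  | comm (S T) : SSC (.sum S T) (.sum T S)
  | assoc (S T U) : SSC (.sum S (.sum T U)) (.sum (.sum S T) U)
  | unit (S) : SSC (.sum S .nil) S
  | idem (S) : SSC (.sum S S) S
  | pre (η) : PSC P Q → SSC (.pre η P) (.pre η Q)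
  | sum : SSC S S' → SSC T T' → SSC (.sum S T) (.sum S' T')
/-- Structural congruence on processes: abelian monoid laws for `‖`,
    plus congruence rules. -/
inductive PSC : PP → PP → Prop where
  | refl (P) : PSC P P
  | symm : PSC P Q → PSC Q P
  | trans : PSC P Q → PSC Q R → PSC P R
  | comm (P Q) : PSC (.par P Q) (.par Q P)
  | assoc (P Q R) : PSC (.par P (.par Q R)) (.par (.par P Q) R)
  | unit (P) : PSC (.par P (.ofS .nil)) P
  | ofS : SSC S T → PSC (.ofS S) (.ofS T)
  | par : PSC P P' → PSC Q Q' → PSC (.par P Q) (.par P' Q')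
end

section Dev

theorem Act.co_co (η : Act) : η.co.co = η := by cases η <;> rfl

def Act.enc : Act → ℕ
  | .inp a => 2 * a
  | .out a => 2 * a + 1

theorem Act.enc_inj : ∀ η η' : Act, η.enc = η'.enc → η = η' := by
  intro η η' h
  cases η <;> cases η' <;> simp_all [Act.enc] <;> omega

mutual
def SP.enc : SP → ℕ
  | .nil => 0
  | .pre η P => 3 * (Nat.pair η.enc P.enc) + 1
  | .sum S T => 3 * (Nat.pair S.enc T.enc) + 2
def PP.enc : PP → ℕ
  | .ofS S => 2 * S.enc
  | .par P Q => 2 * (Nat.pair P.enc Q.enc) + 1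
end

mutual
theorem SP.enc_inj : ∀ S T : SP, S.enc = T.enc → S = T
  | .nil, .nil, _ => rfl
  | .pre η P, .pre η' P', h => by
      simp [SP.enc, Nat.pair_eq_pair] at h
      rw [Act.enc_inj _ _ h.1, PP.enc_inj _ _ h.2]
  | .sum S T, .sum S' T', h => by
      simp [SP.enc, Nat.pair_eq_pair] at h
      rw [SP.enc_inj _ _ h.1, SP.enc_inj _ _ h.2]
  | .nil, .pre _ _, h => by simp [SP.enc] at h
  | .nil, .sum _ _, h => by simp [SP.enc] at h
  | .pre _ _, .nil, h => by simp [SP.enc] at h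
  | .pre _ _, .sum _ _, h => by simp [SP.enc] at h; omega
  | .sum _ _, .nil, h => by simp [SP.enc] at h
  | .sum _ _, .pre _ _, h => by simp [SP.enc] at h; omega
theorem PP.enc_inj : ∀ P Q : PP, P.enc = Q.enc → P = Q
  | .ofS S, .ofS T, h => by
      simp [PP.enc] at h
      rw [SP.enc_inj _ _ h]
  | .par P Q, .par P' Q', h => by
      simp [PP.enc, Nat.pair_eq_pair] at h
      rw [PP.enc_inj _ _ h.1, PP.enc_inj _ _ h.2]
  | .ofS _, .par _ _, h => by simp [PP.enc] at h; omega
  | .par _ _, .ofS _, h => by simp [PP.enc] at h; omega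
end

instance : DecidableEq SP := fun a b =>
  decidable_of_iff (a.enc = b.enc) ⟨SP.enc_inj a b, fun h => h ▸ rfl⟩

noncomputable instance : LinearOrder SP := LinearOrder.lift' SP.enc (fun a b => SP.enc_inj a b)

/-- summand list of a sum -/
def listS : SP → List SP
  | .nil => []
  | .pre η P => [.pre η P]
  | .sum S T => listS S ++ listS T

/-- component list of a process -/
def listP : PP → List SP
  | .ofS S => [S]
  | .par P Q => listP P ++ listP Q

def buildS : List SP → SP := fun l => l.foldr .sum .nil

def buildP : List SP → PP := fun l => l.foldr (fun s acc => .par (.ofS s) acc) (.ofS .nil)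

noncomputable def sortp (l : List SP) : List SP := l.insertionSort (· ≤ ·)

noncomputable def canon (l : List SP) : List SP := sortp l.dedup

theorem sizeOf_mem_listS {x : SP} : ∀ {S : SP}, x ∈ listS S → sizeOf x ≤ sizeOf S
  | .nil, h => by simp [listS] at h
  | .pre η P, h => by simp [listS] at h; subst h; simp
  | .sum S T, h => by
      simp [listS] at h
      rcases h with h | h
      · have := sizeOf_mem_listS (S := S) h; simp; omega
      · have := sizeOf_mem_listS (S := T) h; simp; omega

theorem sizeOf_mem_listP {x : SP} : ∀ {P : PP}, x ∈ listP P → sizeOf x < sizeOf P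
  | .ofS S, h => by simp [listP] at h; subst h; simp
  | .par P Q, h => by
      simp [listP] at h
      rcases h with h | h
      · have := sizeOf_mem_listP (P := P) h; simp; omega
      · have := sizeOf_mem_listP (P := Q) h; simp; omega

mutual
noncomputable def msum : SP → SP
  | .pre η P => .pre η (nP P)
  | y => y
termination_by x => (sizeOf x, 0)
decreasing_by exact Prod.Lex.left _ _ (by simp)
noncomputable def nS (S : SP) : SP :=
  buildS (canon ((listS S).attach.map (fun x => msum x.1)))
termination_by (sizeOf S, 1)
decreasing_by
  rcases lt_or_eq_of_le (sizeOf_mem_listS x.2) with h | h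
  · exact Prod.Lex.left _ _ h
  · rw [h]; exact Prod.Lex.right _ (by omega)
noncomputable def nP (P : PP) : PP :=
  buildP (sortp ((((listP P).attach.map (fun x => nS x.1)).filter (· ≠ SP.nil))))
termination_by (sizeOf P, 0)
decreasing_by exact Prod.Lex.left _ _ (sizeOf_mem_listP x.2)
end

end Dev

theorem nS_def (S : SP) : nS S = buildS (canon ((listS S).map msum)) := by
  rw [nS]; congr 1; congr 1; exact List.attach_map_val

theorem nP_def (P : PP) : nP P = buildP (sortp (((listP P).map nS).filter (· ≠ SP.nil))) := by
  rw [nP]; congr 2; congr 1; exact List.attach_map_val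

noncomputable def cs (S : SP) : List SP := canon ((listS S).map msum)
noncomputable def listPn (P : PP) : List SP := ((listP P).map nS).filter (· ≠ SP.nil)
noncomputable def ncM (P : PP) : Multiset SP := (listPn P : Multiset SP)

theorem nS_def' (S : SP) : nS S = buildS (cs S) := nS_def S
theorem nP_def' (P : PP) : nP P = buildP (sortp (listPn P)) := nP_def P

/- sorting -/
theorem sortp_perm (l : List SP) : (sortp l).Perm l := List.perm_insertionSort _ l
theorem sortp_sorted (l : List SP) : List.Pairwise (· ≤ ·) (sortp l) := List.pairwise_insertionSort _ l
theorem sortp_eq_of_perm {l₁ l₂ : List SP} (h : l₁.Perm l₂) : sortp l₁ = sortp l₂ :=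
  List.Perm.eq_of_pairwise' (sortp_sorted _) (sortp_sorted _)
    ((sortp_perm l₁).trans (h.trans (sortp_perm l₂).symm))
theorem mem_sortp {x : SP} {l : List SP} : x ∈ sortp l ↔ x ∈ l := (sortp_perm l).mem_iff
theorem mem_canon {x : SP} {l : List SP} : x ∈ canon l ↔ x ∈ l := by
  simp [canon, mem_sortp]
theorem canon_nodup (l : List SP) : (canon l).Nodup :=
  (sortp_perm _).nodup_iff.mpr (List.nodup_dedup l)
theorem canon_sorted (l : List SP) : List.Pairwise (· ≤ ·) (canon l) := sortp_sorted _
theorem canon_eq_of_mem_iff {l₁ l₂ : List SP} (h : ∀ x, x ∈ l₁ ↔ x ∈ l₂) :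
    canon l₁ = canon l₂ := by
  apply sortp_eq_of_perm
  apply List.Subperm.antisymm
  · exact (List.nodup_dedup l₁).subperm (fun x hx => by
      rw [List.mem_dedup] at *; exact (h x).mp hx)
  · exact (List.nodup_dedup l₂).subperm (fun x hx => by
      rw [List.mem_dedup] at *; exact (h x).mpr hx)
theorem canon_perm {l₁ l₂ : List SP} (h : l₁.Perm l₂) : canon l₁ = canon l₂ :=
  canon_eq_of_mem_iff (fun x => h.mem_iff)

/- build -/
theorem buildS_cons (x : SP) (l : List SP) : buildS (x :: l) = .sum x (buildS l) := rfl
theorem buildP_cons (x : SP) (l : List SP) : buildP (x :: l) = .par (.ofS x) (buildP l) := rfl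
theorem buildS_inj : ∀ {l₁ l₂ : List SP}, buildS l₁ = buildS l₂ → l₁ = l₂
  | [], [], _ => rfl
  | [], x :: l, h => by simp [buildS, List.foldr] at h
  | x :: l, [], h => by simp [buildS, List.foldr] at h
  | x :: l₁, y :: l₂, h => by
      simp only [buildS_cons] at h
      injection h with h1 h2
      rw [h1, buildS_inj h2]
theorem buildP_inj : ∀ {l₁ l₂ : List SP}, buildP l₁ = buildP l₂ → l₁ = l₂
  | [], [], _ => rfl
  | [], x :: l, h => by simp [buildP, List.foldr] at h
  | x :: l, [], h => by simp [buildP, List.foldr] at h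
  | x :: l₁, y :: l₂, h => by
      simp only [buildP_cons] at h
      injection h with h1 h2
      injection h1 with h1
      rw [h1, buildP_inj h2]
theorem buildS_eq_nil_iff {l : List SP} : buildS l = .nil ↔ l = [] := by
  cases l with
  | nil => simp [buildS]
  | cons x l => simp [buildS_cons]
theorem listS_buildS : ∀ {l : List SP}, (∀ x ∈ l, ∃ η P, x = SP.pre η P) →
    listS (buildS l) = l
  | [], _ => rfl
  | x :: l, h => by
      rw [buildS_cons]
      obtain ⟨η, P, rfl⟩ := h x (by simp)
      show listS _ ++ listS _ = _
      rw [listS_buildS (fun y hy => h y (by simp [hy]))]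
      rfl

/- SSC/PSC algebra on builds -/
theorem ssc_append (l₁ l₂ : List SP) :
    SSC (buildS (l₁ ++ l₂)) (.sum (buildS l₁) (buildS l₂)) := by
  induction l₁ with
  | nil =>
      simp only [List.nil_append]
      exact SSC.symm (SSC.trans (SSC.comm _ _) (SSC.unit _))
  | cons x l ih =>
      simp only [List.cons_append, buildS_cons]
      exact SSC.trans (SSC.sum (SSC.refl x) ih) (SSC.assoc _ _ _)

theorem psc_append (l₁ l₂ : List SP) :
    PSC (buildP (l₁ ++ l₂)) (.par (buildP l₁) (buildP l₂)) := by
  induction l₁ with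
  | nil =>
      simp only [List.nil_append]
      exact PSC.symm (PSC.trans (PSC.comm _ _) (PSC.unit _))
  | cons x l ih =>
      simp only [List.cons_append, buildP_cons]
      exact PSC.trans (PSC.par (PSC.refl _) ih) (PSC.assoc _ _ _)

theorem ssc_listS : ∀ S : SP, SSC S (buildS (listS S))
  | .nil => SSC.refl _
  | .pre η P => SSC.symm (SSC.unit _)
  | .sum S T => by
      show SSC _ (buildS (listS S ++ listS T))
      exact SSC.trans (SSC.sum (ssc_listS S) (ssc_listS T)) (SSC.symm (ssc_append _ _))

theorem psc_listP : ∀ P : PP, PSC P (buildP (listP P))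
  | .ofS S => PSC.symm (PSC.unit _)
  | .par P Q => by
      show PSC _ (buildP (listP P ++ listP Q))
      exact PSC.trans (PSC.par (psc_listP P) (psc_listP Q)) (PSC.symm (psc_append _ _))

theorem ssc_forall₂ : ∀ {l₁ l₂ : List SP}, List.Forall₂ SSC l₁ l₂ →
    SSC (buildS l₁) (buildS l₂)
  | [], [], _ => SSC.refl _
  | x :: l₁, y :: l₂, h => by
      rcases h with _ | ⟨h1, h2⟩
      exact SSC.sum h1 (ssc_forall₂ h2)

theorem psc_forall₂ : ∀ {l₁ l₂ : List SP}, List.Forall₂ SSC l₁ l₂ →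
    PSC (buildP l₁) (buildP l₂)
  | [], [], _ => PSC.refl _
  | x :: l₁, y :: l₂, h => by
      rcases h with _ | ⟨h1, h2⟩
      exact PSC.par (PSC.ofS h1) (psc_forall₂ h2)

theorem ssc_perm {l₁ l₂ : List SP} (h : l₁.Perm l₂) : SSC (buildS l₁) (buildS l₂) := by
  induction h with
  | nil => exact SSC.refl _
  | cons x _ ih => exact SSC.sum (SSC.refl _) ih
  | swap x y l =>
      exact SSC.trans (SSC.assoc _ _ _)
        (SSC.trans (SSC.sum (SSC.comm _ _) (SSC.refl _)) (SSC.symm (SSC.assoc _ _ _)))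
  | trans _ _ ih1 ih2 => exact SSC.trans ih1 ih2

theorem psc_perm {l₁ l₂ : List SP} (h : l₁.Perm l₂) : PSC (buildP l₁) (buildP l₂) := by
  induction h with
  | nil => exact PSC.refl _
  | cons x _ ih => exact PSC.par (PSC.refl _) ih
  | swap x y l =>
      exact PSC.trans (PSC.assoc _ _ _)
        (PSC.trans (PSC.par (PSC.comm _ _) (PSC.refl _)) (PSC.symm (PSC.assoc _ _ _)))
  | trans _ _ ih1 ih2 => exact PSC.trans ih1 ih2

theorem ssc_cons_of_mem {x : SP} {l : List SP} (h : x ∈ l) :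
    SSC (buildS (x :: l)) (buildS l) := by
  have hp : l.Perm (x :: l.erase x) := List.perm_cons_erase h
  refine SSC.trans (SSC.sum (SSC.refl _) (ssc_perm hp)) ?_
  refine SSC.trans (SSC.assoc _ _ _) ?_
  refine SSC.trans (SSC.sum (SSC.idem _) (SSC.refl _)) ?_
  exact ssc_perm hp.symm

theorem ssc_dedup : ∀ l : List SP, SSC (buildS l.dedup) (buildS l)
  | [] => SSC.refl _
  | x :: l => by
      by_cases hx : x ∈ l
      · rw [List.dedup_cons_of_mem hx]
        exact SSC.trans (ssc_dedup l) (SSC.symm (ssc_cons_of_mem hx))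
      · rw [List.dedup_cons_of_notMem hx]
        exact SSC.sum (SSC.refl _) (ssc_dedup l)

theorem ssc_canon (l : List SP) : SSC (buildS (canon l)) (buildS l) :=
  SSC.trans (ssc_perm (sortp_perm _)) (ssc_dedup l)

theorem psc_filter : ∀ l : List SP, PSC (buildP (l.filter (· ≠ SP.nil))) (buildP l)
  | [] => PSC.refl _
  | x :: l => by
      by_cases hx : x = SP.nil
      · subst hx
        rw [List.filter_cons_of_neg (by simp)]
        refine PSC.trans (psc_filter l) ?_
        exact PSC.symm (PSC.trans (PSC.comm _ _) (PSC.unit _))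
      · rw [List.filter_cons_of_pos (by simp [hx])]
        exact PSC.par (PSC.refl _) (psc_filter l)

theorem listS_pres : ∀ {S : SP} {x : SP}, x ∈ listS S → ∃ η P, x = SP.pre η P
  | .nil, x, h => by simp [listS] at h
  | .pre η P, x, h => by simp [listS] at h; exact ⟨η, P, h⟩
  | .sum S T, x, h => by
      simp only [listS, List.mem_append] at h
      rcases h with h | h
      · exact listS_pres (S := S) h
      · exact listS_pres (S := T) h

theorem msum_pre (η : Act) (P : PP) : msum (SP.pre η P) = SP.pre η (nP P) := by rw [msum]

theorem nf_congr : ∀ n : ℕ,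
    (∀ S : SP, sizeOf S ≤ n → SSC S (nS S)) ∧ (∀ P : PP, sizeOf P ≤ n → PSC P (nP P)) := by
  intro n
  induction n using Nat.strong_induction_on with
  | _ n ih =>
    constructor
    · intro S hS
      rw [nS_def]
      refine SSC.trans (ssc_listS S) (SSC.trans ?_ (SSC.symm (ssc_canon _)))
      apply ssc_forall₂
      rw [List.forall₂_map_right_iff]
      rw [List.forall₂_same]
      intro x hx
      obtain ⟨η, P, rfl⟩ := listS_pres hx
      rw [msum_pre]
      have hsz : sizeOf P < n := by
        have h1 := sizeOf_mem_listS hx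
        have : sizeOf P < sizeOf (SP.pre η P) := by simp
        omega
      exact SSC.pre η ((ih (sizeOf P) hsz).2 P le_rfl)
    · intro P hP
      rw [nP_def]
      refine PSC.trans (psc_listP P) (PSC.trans ?_ (PSC.symm (psc_perm (sortp_perm _))))
      refine PSC.trans ?_ (PSC.symm (psc_filter _))
      apply psc_forall₂
      rw [List.forall₂_map_right_iff]
      rw [List.forall₂_same]
      intro S hx
      have hsz : sizeOf S < n := lt_of_lt_of_le (sizeOf_mem_listP hx) hP
      exact (ih (sizeOf S) hsz).1 S le_rfl

theorem ssc_nS (S : SP) : SSC S (nS S) := (nf_congr (sizeOf S)).1 S le_rfl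
theorem psc_nP (P : PP) : PSC P (nP P) := (nf_congr (sizeOf P)).2 P le_rfl

theorem canon_append_congr {A B A' B' : List SP} (h1 : canon A = canon A')
    (h2 : canon B = canon B') : canon (A ++ B) = canon (A' ++ B') := by
  apply canon_eq_of_mem_iff
  intro x
  simp only [List.mem_append]
  rw [← mem_canon (l := A), ← mem_canon (l := B), h1, h2, mem_canon, mem_canon]

theorem perm_of_sortp_eq {A A' : List SP} (h : sortp A = sortp A') : A.Perm A' :=
  (sortp_perm A).symm.trans (h ▸ sortp_perm A')

theorem sortp_append_congr {A B A' B' : List SP} (h1 : sortp A = sortp A')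
    (h2 : sortp B = sortp B') : sortp (A ++ B) = sortp (A' ++ B') :=
  sortp_eq_of_perm ((perm_of_sortp_eq h1).append (perm_of_sortp_eq h2))

theorem listS_sum (S T : SP) : listS (.sum S T) = listS S ++ listS T := rfl
theorem listP_par (P Q : PP) : listP (.par P Q) = listP P ++ listP Q := rfl

theorem listPn_par (P Q : PP) : listPn (.par P Q) = listPn P ++ listPn Q := by
  simp [listPn, listP_par, List.filter_append]

theorem nS_nil : nS .nil = .nil := by
  rw [nS_def]
  show buildS (canon (List.map msum [])) = _
  simp [canon, sortp, buildS]

theorem listPn_ofS_nil : listPn (.ofS .nil) = [] := by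
  simp [listPn, listP, nS_nil]

theorem nP_eq_iff {P Q : PP} : nP P = nP Q ↔ sortp (listPn P) = sortp (listPn Q) := by
  rw [nP_def', nP_def']
  exact ⟨fun h => buildP_inj h, fun h => by rw [h]⟩

theorem nS_eq_iff {S T : SP} : nS S = nS T ↔ cs S = cs T := by
  rw [nS_def', nS_def']
  exact ⟨fun h => buildS_inj h, fun h => by rw [h]⟩

section NfEq

variable (m1 : ∀ (S T : SP), SSC S T → Prop) (m2 : ∀ (P Q : PP), PSC P Q → Prop)

theorem nf_eq_S : ∀ {S T : SP}, SSC S T → nS S = nS T := by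
  intro S T h
  refine SSC.rec (motive_1 := fun S T _ => nS S = nS T) (motive_2 := fun P Q _ => nP P = nP Q)
    (fun S => rfl)
    (fun _ ih => ih.symm)
    (fun _ _ ih1 ih2 => ih1.trans ih2)
    (fun S T => ?comm) (fun S T U => ?assoc) (fun S => ?unit) (fun S => ?idem)
    (fun η _ ih => ?pre) (fun _ _ ih1 ih2 => ?sumc)
    (fun P => rfl)
    (fun _ ih => ih.symm)
    (fun _ _ ih1 ih2 => ih1.trans ih2)
    (fun P Q => ?pcomm) (fun P Q R => ?passoc) (fun P => ?punit)
    (fun _ ih => ?pofS) (fun _ _ ih1 ih2 => ?pparc) h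
  case comm =>
    show nS _ = nS _
    rw [nS_def, nS_def, listS_sum, listS_sum, List.map_append, List.map_append]
    rw [canon_perm (List.perm_append_comm)]
  case assoc =>
    show nS _ = nS _
    rw [nS_def, nS_def, listS_sum, listS_sum, listS_sum, listS_sum, List.append_assoc]
  case unit =>
    show nS _ = nS _
    rw [nS_def, nS_def, listS_sum]
    show buildS (canon (List.map msum (listS S ++ []))) = _
    rw [List.append_nil]
  case idem =>
    show nS _ = nS _
    rw [nS_def, nS_def, listS_sum, List.map_append]
    congr 1
    exact canon_eq_of_mem_iff (fun x => by simp [List.mem_append])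
  case pre =>
    show nS _ = nS _
    replace ih : nP _ = nP _ := ih
    rw [nS_def, nS_def]
    show buildS (canon [msum _]) = buildS (canon [msum _])
    rw [msum_pre, msum_pre, ih]
  case sumc =>
    show nS _ = nS _
    replace ih1 : nS _ = nS _ := ih1
    replace ih2 : nS _ = nS _ := ih2
    rw [nS_eq_iff] at ih1 ih2 ⊢
    show canon (List.map msum (_ ++ _)) = canon (List.map msum (_ ++ _))
    rw [List.map_append, List.map_append]
    exact canon_append_congr ih1 ih2
  case pcomm =>
    show nP _ = nP _
    rw [nP_def', nP_def', listPn_par, listPn_par, sortp_eq_of_perm (List.perm_append_comm)]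
  case passoc =>
    show nP _ = nP _
    rw [nP_def', nP_def', listPn_par, listPn_par, listPn_par, listPn_par, List.append_assoc]
  case punit =>
    show nP _ = nP _
    rw [nP_def', nP_def', listPn_par, listPn_ofS_nil, List.append_nil]
  case pofS =>
    show nP _ = nP _
    replace ih : nS _ = nS _ := ih
    rw [nP_def', nP_def']
    show buildP (sortp (List.filter _ [nS _])) = buildP (sortp (List.filter _ [nS _]))
    rw [ih]
  case pparc =>
    show nP _ = nP _
    replace ih1 : nP _ = nP _ := ih1
    replace ih2 : nP _ = nP _ := ih2
    rw [nP_eq_iff] at ih1 ih2 ⊢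
    rw [listPn_par, listPn_par]
    exact sortp_append_congr ih1 ih2

theorem nf_eq_P : ∀ {P Q : PP}, PSC P Q → nP P = nP Q := by
  intro P Q h
  refine PSC.rec (motive_1 := fun S T _ => nS S = nS T) (motive_2 := fun P Q _ => nP P = nP Q)
    (fun S => rfl)
    (fun _ ih => ih.symm)
    (fun _ _ ih1 ih2 => ih1.trans ih2)
    (fun S T => ?comm) (fun S T U => ?assoc) (fun S => ?unit) (fun S => ?idem)
    (fun η _ ih => ?pre) (fun _ _ ih1 ih2 => ?sumc)
    (fun P => rfl)
    (fun _ ih => ih.symm)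
    (fun _ _ ih1 ih2 => ih1.trans ih2)
    (fun P Q => ?pcomm) (fun P Q R => ?passoc) (fun P => ?punit)
    (fun _ ih => ?pofS) (fun _ _ ih1 ih2 => ?pparc) h
  case comm =>
    show nS _ = nS _
    rw [nS_def, nS_def, listS_sum, listS_sum, List.map_append, List.map_append]
    rw [canon_perm (List.perm_append_comm)]
  case assoc =>
    show nS _ = nS _
    rw [nS_def, nS_def, listS_sum, listS_sum, listS_sum, listS_sum, List.append_assoc]
  case unit =>
    show nS _ = nS _
    rw [nS_def, nS_def, listS_sum]
    show buildS (canon (List.map msum (listS S ++ []))) = _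
    rw [List.append_nil]
  case idem =>
    show nS _ = nS _
    rw [nS_def, nS_def, listS_sum, List.map_append]
    congr 1
    exact canon_eq_of_mem_iff (fun x => by simp [List.mem_append])
  case pre =>
    show nS _ = nS _
    replace ih : nP _ = nP _ := ih
    rw [nS_def, nS_def]
    show buildS (canon [msum _]) = buildS (canon [msum _])
    rw [msum_pre, msum_pre, ih]
  case sumc =>
    show nS _ = nS _
    replace ih1 : nS _ = nS _ := ih1
    replace ih2 : nS _ = nS _ := ih2
    rw [nS_eq_iff] at ih1 ih2 ⊢
    show canon (List.map msum (_ ++ _)) = canon (List.map msum (_ ++ _))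
    rw [List.map_append, List.map_append]
    exact canon_append_congr ih1 ih2
  case pcomm =>
    show nP _ = nP _
    rw [nP_def', nP_def', listPn_par, listPn_par, sortp_eq_of_perm (List.perm_append_comm)]
  case passoc =>
    show nP _ = nP _
    rw [nP_def', nP_def', listPn_par, listPn_par, listPn_par, listPn_par, List.append_assoc]
  case punit =>
    show nP _ = nP _
    rw [nP_def', nP_def', listPn_par, listPn_ofS_nil, List.append_nil]
  case pofS =>
    show nP _ = nP _
    replace ih : nS _ = nS _ := ih
    rw [nP_def', nP_def']
    show buildP (sortp (List.filter _ [nS _])) = buildP (sortp (List.filter _ [nS _]))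
    rw [ih]
  case pparc =>
    show nP _ = nP _
    replace ih1 : nP _ = nP _ := ih1
    replace ih2 : nP _ = nP _ := ih2
    rw [nP_eq_iff] at ih1 ih2 ⊢
    rw [listPn_par, listPn_par]
    exact sortp_append_congr ih1 ih2

end NfEq

/- transitions vs summand lists -/
theorem mem_listS_sstep {η : Act} {A : PP} : ∀ {S : SP}, SP.pre η A ∈ listS S → SStep S η A
  | .nil, h => by simp [listS] at h
  | .pre η' P, h => by simp [listS] at h; rw [h.1, h.2]; exact SStep.pre _ _
  | .sum S T, h => by
      rw [listS_sum, List.mem_append] at h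
      rcases h with h | h
      · exact SStep.sumL (mem_listS_sstep h)
      · exact SStep.sumR (mem_listS_sstep h)

theorem sstep_iff_mem : ∀ {S : SP} {η : Act} {A : PP}, SStep S η A ↔ SP.pre η A ∈ listS S := by
  intro S η A
  constructor
  · intro h
    induction h with
    | pre η P => simp [listS]
    | sumL _ ih => simp [listS_sum]; exact Or.inl ih
    | sumR _ ih => simp [listS_sum]; exact Or.inr ih
  · exact mem_listS_sstep

theorem listS_nS (S : SP) : listS (nS S) = cs S := by
  rw [nS_def']
  apply listS_buildS
  intro x hx
  rw [cs, mem_canon] at hx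
  obtain ⟨y, hy, rfl⟩ := List.mem_map.mp hx
  obtain ⟨η, P, rfl⟩ := listS_pres hy
  exact ⟨η, nP P, by rw [msum_pre]⟩

theorem mem_cs {S : SP} {η : Act} {p : PP} :
    SP.pre η p ∈ cs S ↔ ∃ A, SStep S η A ∧ nP A = p := by
  rw [cs, mem_canon]
  constructor
  · intro h
    obtain ⟨y, hy, hmy⟩ := List.mem_map.mp h
    obtain ⟨η', P, rfl⟩ := listS_pres hy
    rw [msum_pre] at hmy
    injection hmy with h1 h2
    subst h1; subst h2
    exact ⟨P, sstep_iff_mem.mpr hy, rfl⟩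
  · rintro ⟨A, hA, rfl⟩
    refine List.mem_map.mpr ⟨SP.pre η A, sstep_iff_mem.mp hA, msum_pre _ _⟩

theorem summand_nS {S : SP} {η : Act} {A : PP} (h : SStep S η A) :
    SP.pre η (nP A) ∈ listS (nS S) := by
  rw [listS_nS]; exact mem_cs.mpr ⟨A, h, rfl⟩

theorem nS_ne_nil {S : SP} {η : Act} {A : PP} (h : SStep S η A) : nS S ≠ .nil := by
  intro hn
  have := summand_nS h
  rw [hn] at this
  simp [listS] at this

/- sizes -/
theorem sstep_size {S : SP} {η : Act} {A : PP} (h : SStep S η A) :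
    sizeOf A < sizeOf S ∧ 2 ≤ sizeOf S := by
  induction h with
  | pre η P => refine ⟨by simp, ?_⟩; cases η <;> simp <;> omega
  | sumL _ ih => constructor <;> (simp; omega)
  | sumR _ ih => constructor <;> (simp; omega)

theorem dstep_size {P P₁ P₂ : PP} {μ : Lab} (h : DStep P μ P₁ P₂) :
    sizeOf P₁ < sizeOf P ∧ sizeOf P₂ < sizeOf P := by
  induction h with
  | ofS hs =>
      have := sstep_size hs
      constructor <;> simp <;> omega
  | parL P' _ ih => constructor <;> simp <;> omega
  | parR P _ ih => constructor <;> simp <;> omega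
  | syn _ _ ih1 ih2 => constructor <;> simp <;> omega

/- multiset of normalized live components -/
noncomputable def Fm (m : Multiset SP) : Multiset SP := (m.map nS).filter (· ≠ SP.nil)

theorem ncM_eq (P : PP) : ncM P = Fm (listP P : Multiset SP) := by
  simp [ncM, listPn, Fm]

theorem Fm_cons_live {a : SP} {m : Multiset SP} (h : nS a ≠ .nil) :
    Fm (a ::ₘ m) = nS a ::ₘ Fm m := by
  simp [Fm, Multiset.map_cons, Multiset.filter_cons_of_pos, h]

theorem Fm_cons_nil {a : SP} {m : Multiset SP} (h : nS a = .nil) :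
    Fm (a ::ₘ m) = Fm m := by
  simp [Fm, Multiset.map_cons, Multiset.filter_cons_of_neg, h]

theorem Fm_nilc {m : Multiset SP} : Fm (SP.nil ::ₘ m) = Fm m := Fm_cons_nil nS_nil

theorem cons_add_right {α : Type*} (a : α) (s t : Multiset α) :
    a ::ₘ (s + t) = s + (a ::ₘ t) := by
  rw [add_comm s (a ::ₘ t), Multiset.cons_add, add_comm t s]

theorem cons_cons_add {α : Type*} (a b : α) (s t : Multiset α) :
    a ::ₘ b ::ₘ (s + t) = (a ::ₘ s) + (b ::ₘ t) := by
  rw [Multiset.cons_add, cons_add_right b s t]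

theorem coeP (P Q : PP) : (listP (P.par Q) : Multiset SP) = ↑(listP P) + ↑(listP Q) := by
  rw [listP_par]; exact (Multiset.coe_add _ _)

/- analysis of distributed transitions -/
theorem dstep_vis {P P₁ P₂ : PP} {μ : Lab} (h : DStep P μ P₁ P₂) :
    ∀ {η : Act}, μ = .act η →
    ∃ S, SStep S η P₁ ∧ (S ::ₘ (listP P₂ : Multiset SP)) = SP.nil ::ₘ (listP P : Multiset SP) := by
  induction h with
  | ofS hs =>
      intro η hη
      injection hη with hη; subst hη
      refine ⟨_, hs, ?_⟩
      show _ ::ₘ ((([SP.nil] : List SP)) : Multiset SP) = SP.nil ::ₘ (([_] : List SP) : Multiset SP)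
      rw [Multiset.coe_singleton, Multiset.coe_singleton]
      exact Multiset.cons_swap _ _ _
  | parL P' _ ih =>
      intro η hη
      obtain ⟨S, hS, he⟩ := ih hη
      refine ⟨S, hS, ?_⟩
      simp only [coeP, ← Multiset.cons_add]
      rw [he]
  | parR P _ ih =>
      intro η hη
      obtain ⟨S, hS, he⟩ := ih hη
      refine ⟨S, hS, ?_⟩
      simp only [coeP, cons_add_right]
      rw [he]
  | syn _ _ _ _ =>
      intro η hη
      exact absurd hη (by simp)

theorem dstep_tau {P P₁ P₂ : PP} {μ : Lab} (h : DStep P μ P₁ P₂) : μ = .tau →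
    ∃ S T η A B, SStep S η A ∧ SStep T η.co B ∧ P₁ = .par A B ∧
      S ::ₘ T ::ₘ (listP P₂ : Multiset SP) = SP.nil ::ₘ SP.nil ::ₘ (listP P : Multiset SP) := by
  induction h with
  | ofS hs => intro hμ; exact absurd hμ (by simp)
  | parL P' _ ih =>
      intro hμ
      obtain ⟨S, T, η, A, B, h1, h2, h3, he⟩ := ih hμ
      refine ⟨S, T, η, A, B, h1, h2, h3, ?_⟩
      simp only [coeP, ← Multiset.cons_add]
      rw [he]
  | parR P _ ih =>
      intro hμ
      obtain ⟨S, T, η, A, B, h1, h2, h3, he⟩ := ih hμ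
      refine ⟨S, T, η, A, B, h1, h2, h3, ?_⟩
      simp only [coeP, cons_add_right]
      rw [he]
  | syn hP hQ ihP ihQ =>
      intro _
      obtain ⟨S, hS, heS⟩ := dstep_vis hP rfl
      obtain ⟨T, hT, heT⟩ := dstep_vis hQ rfl
      refine ⟨S, T, _, _, _, hS, hT, rfl, ?_⟩
      simp only [coeP]
      rw [cons_cons_add, heS, heT, ← cons_cons_add]

/- lifting transitions -/
theorem liftVis {S : SP} {η : Act} {A : PP} : ∀ {P : PP}, S ∈ listP P → SStep S η A →
    ∃ P₂, DStep P (.act η) A P₂ ∧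
      S ::ₘ (listP P₂ : Multiset SP) = SP.nil ::ₘ (listP P : Multiset SP)
  | .ofS T, hmem, hs => by
      simp [listP] at hmem
      subst hmem
      refine ⟨.ofS .nil, DStep.ofS hs, ?_⟩
      show _ ::ₘ ((([SP.nil] : List SP)) : Multiset SP) = SP.nil ::ₘ (([_] : List SP) : Multiset SP)
      rw [Multiset.coe_singleton, Multiset.coe_singleton]
      exact Multiset.cons_swap _ _ _
  | .par P Q, hmem, hs => by
      rw [listP_par, List.mem_append] at hmem
      rcases hmem with hm | hm
      · obtain ⟨P₂, hd, he⟩ := liftVis hm hs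
        refine ⟨.par P₂ Q, DStep.parL Q hd, ?_⟩
        simp only [coeP, ← Multiset.cons_add]
        rw [he]
      · obtain ⟨Q₂, hd, he⟩ := liftVis hm hs
        refine ⟨.par P Q₂, DStep.parR P hd, ?_⟩
        simp only [coeP, cons_add_right]
        rw [he]

theorem liftTau {S T : SP} {η : Act} {A B : PP} :
    ∀ {P : PP}, S ∈ (listP P : Multiset SP) → T ∈ ((listP P : Multiset SP)).erase S →
    SStep S η A → SStep T η.co B →
    ∃ P₁ P₂, DStep P .tau P₁ P₂ ∧ (P₁ = .par A B ∨ P₁ = .par B A) ∧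
      S ::ₘ T ::ₘ (listP P₂ : Multiset SP) = SP.nil ::ₘ SP.nil ::ₘ (listP P : Multiset SP)
  | .ofS U, hS, hT, _, _ => by
      simp [listP] at hS
      subst hS
      simp [listP] at hT
  | .par P Q, hS, hT, hsS, hsT => by
      rw [coeP] at hS hT
      by_cases hSP : S ∈ (listP P : Multiset SP)
      · rw [Multiset.erase_add_left_pos _ hSP] at hT
        rcases Multiset.mem_add.mp hT with hTP | hTQ
        · -- both in P
          obtain ⟨P₁, P₂, hd, hor, he⟩ := liftTau hSP hTP hsS hsT
          refine ⟨P₁, .par P₂ Q, DStep.parL Q hd, hor, ?_⟩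
          simp only [coeP, ← Multiset.cons_add]
          rw [he]
        · -- S in P, T in Q : synchronize
          obtain ⟨P₂, hdP, heP⟩ := liftVis (Multiset.mem_coe.mp hSP) hsS
          obtain ⟨Q₂, hdQ, heQ⟩ := liftVis (Multiset.mem_coe.mp hTQ) hsT
          refine ⟨.par A B, .par P₂ Q₂, DStep.syn hdP hdQ, Or.inl rfl, ?_⟩
          simp only [coeP]
          rw [cons_cons_add, heP, heQ, ← cons_cons_add]
      · have hSQ : S ∈ (listP Q : Multiset SP) := by
          rcases Multiset.mem_add.mp hS with h | h
          · exact absurd h hSP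
          · exact h
        rw [Multiset.erase_add_right_pos _ hSQ] at hT
        rcases Multiset.mem_add.mp hT with hTP | hTQ
        · -- S in Q, T in P : synchronize (swapped)
          obtain ⟨P₂, hdP, heP⟩ := liftVis (Multiset.mem_coe.mp hTP) hsT
          obtain ⟨Q₂, hdQ, heQ⟩ := liftVis (Multiset.mem_coe.mp hSQ) hsS
          have hco : Lab.tau = Lab.tau := rfl
          refine ⟨.par B A, .par P₂ Q₂, ?_, Or.inr rfl, ?_⟩
          · have := DStep.syn (η := η.co) hdP (by rw [Act.co_co]; exact hdQ)
            exact this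
          · simp only [coeP]
            rw [Multiset.cons_swap, cons_cons_add, heP, heQ, ← cons_cons_add]
        · -- both in Q
          obtain ⟨P₁, P₂, hd, hor, he⟩ := liftTau hSQ hTQ hsS hsT
          refine ⟨P₁, .par P P₂, DStep.parR P hd, hor, ?_⟩
          simp only [coeP, cons_add_right]
          rw [he]

theorem sstep_ne_nil {S : SP} {η : Act} {A : PP} (h : SStep S η A) : S ≠ .nil := by
  intro hn; subst hn
  have := sstep_iff_mem.mp h
  simp [listS] at this

theorem nP_eq_iff_ncM {P Q : PP} : nP P = nP Q ↔ ncM P = ncM Q := by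
  rw [nP_eq_iff]
  constructor
  · intro h
    exact Multiset.coe_eq_coe.mpr (perm_of_sortp_eq h)
  · intro h
    exact sortp_eq_of_perm (Multiset.coe_eq_coe.mp h)

theorem psc_of_nP_eq {A B : PP} (h : nP A = nP B) : PSC A B :=
  PSC.trans (psc_nP A) (h ▸ PSC.symm (psc_nP B))

theorem psc_of_ncM_eq {A B : PP} (h : ncM A = ncM B) : PSC A B :=
  psc_of_nP_eq (nP_eq_iff_ncM.mpr h)

theorem fm_vis {S : SP} {P₂ P : PP}
    (he : S ::ₘ (listP P₂ : Multiset SP) = SP.nil ::ₘ (listP P : Multiset SP))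
    (hlive : nS S ≠ .nil) : nS S ::ₘ ncM P₂ = ncM P := by
  have h := congrArg Fm he
  rw [Fm_cons_live hlive, Fm_nilc] at h
  rw [ncM_eq, ncM_eq]
  exact h

theorem fm_tau {S T : SP} {P₂ P : PP}
    (he : S ::ₘ T ::ₘ (listP P₂ : Multiset SP) = SP.nil ::ₘ SP.nil ::ₘ (listP P : Multiset SP))
    (hlS : nS S ≠ .nil) (hlT : nS T ≠ .nil) :
    nS S ::ₘ nS T ::ₘ ncM P₂ = ncM P := by
  have h := congrArg Fm he
  rw [Fm_cons_live hlS, Fm_cons_live hlT, Fm_nilc, Fm_nilc] at h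
  rw [ncM_eq, ncM_eq]
  exact h

theorem mem_listP_of_he {S : SP} {P₂ P : PP}
    (he : S ::ₘ (listP P₂ : Multiset SP) = SP.nil ::ₘ (listP P : Multiset SP))
    (hne : S ≠ SP.nil) : S ∈ listP P := by
  have : S ∈ SP.nil ::ₘ (listP P : Multiset SP) := he ▸ Multiset.mem_cons_self _ _
  rcases Multiset.mem_cons.mp this with h | h
  · exact absurd h hne
  · exact Multiset.mem_coe.mp h

theorem mem_ncM' {S : SP} {P : PP} (hm : S ∈ listP P) (hl : nS S ≠ .nil) :
    nS S ∈ ncM P := by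
  rw [ncM_eq]
  exact Multiset.mem_filter.mpr ⟨Multiset.mem_map.mpr ⟨S, Multiset.mem_coe.mpr hm, rfl⟩, by simpa using hl⟩

theorem mem_ncM {a : SP} {P : PP} (h : a ∈ ncM P) :
    ∃ S, S ∈ listP P ∧ nS S = a ∧ a ≠ .nil := by
  rw [ncM_eq] at h
  have h2 := Multiset.mem_filter.mp h
  obtain ⟨S, hS, rfl⟩ := Multiset.mem_map.mp h2.1
  exact ⟨S, Multiset.mem_coe.mp hS, rfl, by simpa using h2.2⟩

theorem exists_of_mem_Fm {a : SP} {m : Multiset SP} (h : a ∈ Fm m) :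
    ∃ x, x ∈ m ∧ nS x = a ∧ Fm (m.erase x) = (Fm m).erase a := by
  have h2 := Multiset.mem_filter.mp h
  obtain ⟨x, hx, rfl⟩ := Multiset.mem_map.mp h2.1
  have hne : nS x ≠ .nil := by simpa using h2.2
  refine ⟨x, hx, rfl, ?_⟩
  have hm : m = x ::ₘ m.erase x := (Multiset.cons_erase hx).symm
  conv_rhs => rw [hm]
  rw [Fm_cons_live hne, Multiset.erase_cons_head]

theorem cs_mem_pre {S : SP} {x : SP} (h : x ∈ cs S) : ∃ η p, x = SP.pre η p := by
  rw [cs, mem_canon] at h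
  obtain ⟨y, hy, rfl⟩ := List.mem_map.mp h
  obtain ⟨η, P, rfl⟩ := listS_pres hy
  exact ⟨η, nP P, msum_pre _ _⟩

theorem nS_eq_of_mem_iff {S T : SP} (h : ∀ x, x ∈ cs S ↔ x ∈ cs T) : nS S = nS T := by
  rw [nS_eq_iff]
  exact canon_eq_of_mem_iff (fun x => by
    rw [← mem_canon (l := (listS S).map msum), ← mem_canon (l := (listS T).map msum)]
    exact h x)

theorem cs_ne_nil {S : SP} (h : nS S ≠ .nil) : cs S ≠ [] := by
  intro hc
  rw [nS_def', hc] at h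
  exact h rfl

theorem erase_inj {s : Multiset SP} {a b : SP} (ha : a ∈ s) (hb : b ∈ s)
    (h : s.erase a = s.erase b) : a = b := by
  by_contra hne
  have h1 : s.count a - 1 = s.count a := by
    calc s.count a - 1 = (s.erase a).count a := (Multiset.count_erase_self a s).symm
    _ = (s.erase b).count a := by rw [h]
    _ = s.count a := Multiset.count_erase_of_ne hne s
  have h2 : 1 ≤ s.count a := Multiset.one_le_count_iff_mem.mpr ha
  omega

/- distributed bisimilarity basics -/
theorem dbisim_symm {P Q : PP} (h : DBisim P Q) : DBisim Q P := by
  obtain ⟨R, hR, hPQ⟩ := h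
  exact ⟨R, hR, hR.1 _ _ hPQ⟩

theorem dbisim_step {P Q P₁ P₂ : PP} {μ : Lab} (h : DBisim P Q) (hd : DStep P μ P₁ P₂) :
    ∃ Q₁ Q₂, DStep Q μ Q₁ Q₂ ∧ DBisim P₁ Q₁ ∧ DBisim P₂ Q₂ := by
  obtain ⟨R, hR, hPQ⟩ := h
  obtain ⟨Q₁, Q₂, hdQ, h1, h2⟩ := hR.2 _ _ _ _ _ hPQ hd
  exact ⟨Q₁, Q₂, hdQ, ⟨R, hR, h1⟩, ⟨R, hR, h2⟩⟩

/- abstract matching lemma -/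
theorem ms_match {M N : Multiset SP}
    (hMc : ∀ a ∈ M, ∀ b ∈ N, (∀ x, x ∈ listS a ↔ x ∈ listS b) → a = b)
    (hMne : ∀ a ∈ M, ∃ η p, SP.pre η p ∈ listS a)
    (hNne : ∀ b ∈ N, ∃ η p, SP.pre η p ∈ listS b)
    (hMpre : ∀ a ∈ M, ∀ x ∈ listS a, ∃ η p, x = SP.pre η p)
    (hNpre : ∀ b ∈ N, ∀ x ∈ listS b, ∃ η p, x = SP.pre η p)
    (hA : ∀ a ∈ M, ∀ η p, SP.pre η p ∈ listS a →
        ∃ b, b ∈ N ∧ SP.pre η p ∈ listS b ∧ M.erase a = N.erase b)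
    (hB : ∀ b ∈ N, ∀ η p, SP.pre η p ∈ listS b →
        ∃ a, a ∈ M ∧ SP.pre η p ∈ listS a ∧ N.erase b = M.erase a) :
    M = N := by
  rcases eq_or_ne M 0 with hM0 | hM0
  · subst hM0
    rcases eq_or_ne N 0 with hN0 | hN0
    · rw [hN0]
    · obtain ⟨b, hb⟩ := Multiset.exists_mem_of_ne_zero hN0
      obtain ⟨η, p, hp⟩ := hNne b hb
      obtain ⟨a, ha, _⟩ := hB b hb η p hp
      exact absurd ha (by simp)
  · obtain ⟨a, ha⟩ := Multiset.exists_mem_of_ne_zero hM0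
    obtain ⟨η, p, hp⟩ := hMne a ha
    obtain ⟨b, hb, hpb, hE⟩ := hA a ha η p hp
    have hab : a = b := by
      apply hMc a ha b hb
      intro x
      constructor
      · intro hx
        obtain ⟨η', p', rfl⟩ := hMpre a ha x hx
        obtain ⟨b', hb', hxb', hE'⟩ := hA a ha η' p' hx
        have : b' = b := erase_inj hb' hb (by rw [← hE', hE])
        rwa [this] at hxb'
      · intro hx
        obtain ⟨η', p', rfl⟩ := hNpre b hb x hx
        obtain ⟨a', ha', hxa', hE'⟩ := hB b hb η' p' hx
        have : a' = a := erase_inj ha' ha (by rw [← hE', hE])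
        rwa [this] at hxa'
    rw [← Multiset.cons_erase ha, ← Multiset.cons_erase hb, hE, hab]

/- completeness: distributed bisimilarity implies equal normal forms -/
theorem compl : ∀ n : ℕ, ∀ P Q : PP, sizeOf P + sizeOf Q ≤ n → DBisim P Q → nP P = nP Q := by
  intro n
  induction n using Nat.strong_induction_on with
  | _ n ih =>
    intro P Q hn h
    have key : ∀ P Q : PP, sizeOf P + sizeOf Q ≤ n → DBisim P Q →
        (∀ a ∈ ncM P, ∀ η p, SP.pre η p ∈ listS a →
          ∃ b, b ∈ ncM Q ∧ SP.pre η p ∈ listS b ∧ (ncM P).erase a = (ncM Q).erase b) := by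
      intro P Q hn h a ha η p hpre
      obtain ⟨S, hSP, rfl, hane⟩ := mem_ncM ha
      rw [listS_nS] at hpre
      obtain ⟨A, hsA, hpA⟩ := mem_cs.mp hpre
      obtain ⟨P₂, hd, he⟩ := liftVis hSP hsA
      obtain ⟨Q₁, Q₂, hdQ, hb1, hb2⟩ := dbisim_step h hd
      obtain ⟨T, hsT, heQ⟩ := dstep_vis hdQ rfl
      have hszP := dstep_size hd
      have hszQ := dstep_size hdQ
      have h1 : nP A = nP Q₁ := ih (sizeOf A + sizeOf Q₁)
        (by omega) A Q₁ le_rfl hb1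
      have h2 : nP P₂ = nP Q₂ := ih (sizeOf P₂ + sizeOf Q₂)
        (by omega) P₂ Q₂ le_rfl hb2
      have hTQ : T ∈ listP Q := mem_listP_of_he heQ (sstep_ne_nil hsT)
      refine ⟨nS T, mem_ncM' hTQ (nS_ne_nil hsT), ?_, ?_⟩
      · rw [listS_nS]
        rw [← hpA, h1]
        exact mem_cs.mpr ⟨Q₁, hsT, rfl⟩
      · have e1 : nS S ::ₘ ncM P₂ = ncM P := fm_vis he (nS_ne_nil hsA)
        have e2 : nS T ::ₘ ncM Q₂ = ncM Q := fm_vis heQ (nS_ne_nil hsT)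
        rw [← e1, ← e2, Multiset.erase_cons_head, Multiset.erase_cons_head]
        exact nP_eq_iff_ncM.mp h2
    rw [nP_eq_iff_ncM]
    have hnQ : sizeOf Q + sizeOf P ≤ n := by omega
    apply ms_match
    · intro a haM b hbN hiff
      obtain ⟨S, _, rfl, _⟩ := mem_ncM haM
      obtain ⟨T, _, rfl, _⟩ := mem_ncM hbN
      apply nS_eq_of_mem_iff
      intro x
      rw [← listS_nS, ← listS_nS]
      exact hiff x
    · intro a haM
      obtain ⟨S, _, rfl, hane⟩ := mem_ncM haM
      rw [listS_nS]
      obtain ⟨x, hx⟩ := List.exists_mem_of_ne_nil _ (cs_ne_nil hane)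
      obtain ⟨η, p, rfl⟩ := cs_mem_pre hx
      exact ⟨η, p, hx⟩
    · intro b hbN
      obtain ⟨T, _, rfl, hbne⟩ := mem_ncM hbN
      rw [listS_nS]
      obtain ⟨x, hx⟩ := List.exists_mem_of_ne_nil _ (cs_ne_nil hbne)
      obtain ⟨η, p, rfl⟩ := cs_mem_pre hx
      exact ⟨η, p, hx⟩
    · intro a haM x hx
      obtain ⟨S, _, rfl, _⟩ := mem_ncM haM
      rw [listS_nS] at hx
      exact cs_mem_pre hx
    · intro b hbN x hx
      obtain ⟨T, _, rfl, _⟩ := mem_ncM hbN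
      rw [listS_nS] at hx
      exact cs_mem_pre hx
    · exact key P Q hn h
    · exact key Q P hnQ (dbisim_symm h)

/- soundness: PSC is a distributed bisimulation -/
theorem psc_transfer {P Q P₁ P₂ : PP} {μ : Lab} (h : PSC P Q) (hd : DStep P μ P₁ P₂) :
    ∃ Q₁ Q₂, DStep Q μ Q₁ Q₂ ∧ PSC P₁ Q₁ ∧ PSC P₂ Q₂ := by
  have hn : ncM P = ncM Q := nP_eq_iff_ncM.mp (nf_eq_P h)
  cases μ with
  | act η =>
      obtain ⟨S, hsS, he⟩ := dstep_vis hd rfl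
      have hSmem : S ∈ listP P := mem_listP_of_he he (sstep_ne_nil hsS)
      have hin : nS S ∈ Fm (listP Q : Multiset SP) := by
        rw [← ncM_eq, ← hn]
        exact mem_ncM' hSmem (nS_ne_nil hsS)
      obtain ⟨T, hTQ, hnST, _⟩ := exists_of_mem_Fm hin
      have hsum : SP.pre η (nP P₁) ∈ listS (nS T) := by
        rw [hnST]; exact summand_nS hsS
      rw [listS_nS] at hsum
      obtain ⟨Q₁, hsT, hpQ⟩ := mem_cs.mp hsum
      obtain ⟨Q₂, hdQ, heQ⟩ := liftVis (Multiset.mem_coe.mp hTQ) hsT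
      refine ⟨Q₁, Q₂, hdQ, psc_of_nP_eq hpQ.symm, ?_⟩
      apply psc_of_ncM_eq
      have e1 : nS S ::ₘ ncM P₂ = ncM P := fm_vis he (nS_ne_nil hsS)
      have e2 : nS T ::ₘ ncM Q₂ = ncM Q := fm_vis heQ (nS_ne_nil hsT)
      have : nS S ::ₘ ncM P₂ = nS S ::ₘ ncM Q₂ := by
        rw [e1, hn, ← e2, hnST]
      exact (Multiset.cons_inj_right _).mp this
  | tau =>
      obtain ⟨S, T, η, A, B, hsA, hsB, hP₁, he⟩ := dstep_tau hd rfl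
      have e1 : nS S ::ₘ nS T ::ₘ ncM P₂ = ncM P := fm_tau he (nS_ne_nil hsA) (nS_ne_nil hsB)
      have hinS : nS S ∈ Fm (listP Q : Multiset SP) := by
        rw [← ncM_eq, ← hn, ← e1]
        exact Multiset.mem_cons_self _ _
      obtain ⟨S', hS'Q, hnS', hF1⟩ := exists_of_mem_Fm hinS
      have hinT : nS T ∈ Fm ((listP Q : Multiset SP).erase S') := by
        rw [hF1, ← ncM_eq, ← hn, ← e1, Multiset.erase_cons_head]
        exact Multiset.mem_cons_self _ _
      obtain ⟨T', hT'Q, hnT', hF2⟩ := exists_of_mem_Fm hinT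
      -- summand derivatives in Q's components
      have hsumA : SP.pre η (nP A) ∈ cs S' := by
        rw [← listS_nS, hnS']; exact summand_nS hsA
      obtain ⟨A', hsA', hpA⟩ := mem_cs.mp hsumA
      have hsumB : SP.pre η.co (nP B) ∈ cs T' := by
        rw [← listS_nS, hnT']; exact summand_nS hsB
      obtain ⟨B', hsB', hpB⟩ := mem_cs.mp hsumB
      obtain ⟨Q₁, Q₂, hdQ, hor, heQ⟩ := liftTau hS'Q hT'Q hsA' hsB'
      refine ⟨Q₁, Q₂, hdQ, ?_, ?_⟩
      · subst hP₁
        have hAA : PSC A A' := psc_of_nP_eq hpA.symm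
        have hBB : PSC B B' := psc_of_nP_eq hpB.symm
        rcases hor with rfl | rfl
        · exact PSC.par hAA hBB
        · exact PSC.trans (PSC.par hAA hBB) (PSC.comm _ _)
      · apply psc_of_ncM_eq
        have e2 : nS S' ::ₘ nS T' ::ₘ ncM Q₂ = ncM Q :=
          fm_tau heQ (nS_ne_nil hsA') (nS_ne_nil hsB')
        have : nS S ::ₘ nS T ::ₘ ncM P₂ = nS S ::ₘ nS T ::ₘ ncM Q₂ := by
          rw [e1, hn, ← e2, hnS', hnT']
        have := (Multiset.cons_inj_right _).mp this
        exact (Multiset.cons_inj_right _).mp this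

theorem psc_isDBisim : IsDBisim PSC :=
  ⟨fun _ _ h => h.symm, fun _ _ _ _ _ h hd => psc_transfer h hd⟩

theorem dbisim_of_psc {P Q : PP} (h : PSC P Q) : DBisim P Q := ⟨PSC, psc_isDBisim, h⟩

theorem psc_of_dbisim {P Q : PP} (h : DBisim P Q) : PSC P Q := by
  have := compl (sizeOf P + sizeOf Q) P Q le_rfl h
  exact psc_of_nP_eq this

/-- in microCCS with choice, distributed bisimilarity
    coincides with structural congruence (including idempotence of `+`). -/
theorem dbisim_iff_sc (P Q : PP) : DBisim P Q ↔ PSC P Q := by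
  exact ⟨psc_of_dbisim, dbisim_of_psc⟩
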